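/- In the one-dimensional long-range percolation model on {0,...,N} with s = 2 and β > 0, the probability that a fixed node i ∈ {1,...,N-1} is a cut node (no edge (j,k) with j < i < k) is at least exp(-β·Σ_{n=1}^{N}(n-1)/n²), which is Θ(N^{-β}). -/

import Mathlib

open MeasureTheory ProbabilityTheory Finset

lemma my_iIndepSet_compl {Ω ι : Type*} [MeasurableSpace Ω] {μ : Measure Ω}
    {f : ι → Set Ω} (h : iIndepSet f μ) : iIndepSet (fun i => (f i)ᶜ) μ := by
  rw [← ProbabilityTheory.iIndep_comap_mem_iff] at h ⊢
  have hnot : Function.Injective Not := fun p q hpq => by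
    calc p = ¬¬p := (propext not_not).symm
    _ = ¬¬q := congrArg Not hpq
    _ = q := propext not_not
  have key : MeasurableSpace.comap Not (⊤ : MeasurableSpace Prop) = ⊤ := by
    refine le_antisymm le_top ?_
    intro S _
    exact ⟨Not '' S, trivial, hnot.preimage_image S⟩
  have : (fun i => MeasurableSpace.comap (· ∈ (f i)ᶜ) ⊤)
      = fun i => MeasurableSpace.comap (· ∈ f i) (⊤ : MeasurableSpace Prop) := by
    funext i
    have h1 : (fun x => x ∈ (f i)ᶜ) = Not ∘ (fun x => x ∈ f i) := rfl
    rw [h1, ← MeasurableSpace.comap_comp, key]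
  rwa [this]

lemma my_part1 {Ω : Type*} [MeasurableSpace Ω] (μ : Measure Ω) [IsProbabilityMeasure μ]
    (β : ℝ) (hβ : 0 < β) (N : ℕ) (hN : 2 ≤ N)
    (Edge : ℕ × ℕ → Set Ω) (hmeas : ∀ p, MeasurableSet (Edge p))
    (hindep : iIndepSet Edge μ)
    (hprob : ∀ j k : ℕ, j + 2 ≤ k → k ≤ N →
      μ (Edge (j, k)) = ENNReal.ofReal (1 - Real.exp (-β / ((k : ℝ) - j) ^ 2)))
    (i : ℕ) (hi : 1 ≤ i) (hi' : i ≤ N - 1) :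
    ENNReal.ofReal (Real.exp (-β * ∑ n ∈ Finset.Icc 1 N, ((n : ℝ) - 1) / (n : ℝ) ^ 2))
        ≤ μ (⋂ p ∈ {p : ℕ × ℕ | p.1 < i ∧ i < p.2 ∧ p.2 ≤ N}, (Edge p)ᶜ) := by
  set S : Finset (ℕ × ℕ) := Finset.range i ×ˢ Finset.Icc (i+1) N with hS
  have hset : {p : ℕ × ℕ | p.1 < i ∧ i < p.2 ∧ p.2 ≤ N} = (S : Set (ℕ × ℕ)) := by
    ext p
    simp [hS, Finset.mem_product]
  rw [hset]
  have hbi : (⋂ p ∈ (S : Set (ℕ × ℕ)), (Edge p)ᶜ) = ⋂ p ∈ S, (Edge p)ᶜ := by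
    simp
  rw [hbi, (my_iIndepSet_compl hindep).meas_biInter S]
  -- each factor
  have hfac : ∀ p ∈ S, μ ((Edge p)ᶜ)
      = ENNReal.ofReal (Real.exp (-β / ((p.2 : ℝ) - p.1) ^ 2)) := by
    intro p hp
    simp only [hS, Finset.mem_product, Finset.mem_range, Finset.mem_Icc] at hp
    have h3 : p.2 ≤ N := hp.2.2
    have hjk : p.1 + 2 ≤ p.2 := by omega
    have hd : (2:ℝ) ≤ (p.2 : ℝ) - p.1 := by
      have : (p.1 + 2 : ℕ) ≤ p.2 := hjk
      push_cast [Nat.cast_le.mpr this]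
      have := (Nat.cast_le (α := ℝ)).mpr hjk
      push_cast at this
      linarith
    have hexp1 : Real.exp (-β / ((p.2 : ℝ) - p.1) ^ 2) ≤ 1 := by
      apply Real.exp_le_one_iff.mpr
      apply div_nonpos_of_nonpos_of_nonneg <;> nlinarith
    have hexp0 : 0 < Real.exp (-β / ((p.2 : ℝ) - p.1) ^ 2) := Real.exp_pos _
    rw [prob_compl_eq_one_sub (hmeas p)]
    have := hprob p.1 p.2 hjk h3
    rw [show (p.1, p.2) = p from rfl] at this
    rw [this]
    rw [← ENNReal.ofReal_one, ← ENNReal.ofReal_sub _ (by linarith)]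
    ring_nf
  rw [Finset.prod_congr rfl hfac, ← ENNReal.ofReal_prod_of_nonneg
    (fun p _ => (Real.exp_pos _).le), ← Real.exp_sum]
  apply ENNReal.ofReal_le_ofReal
  apply Real.exp_le_exp.mpr
  -- sum inequality
  have key : ∑ p ∈ S, β / ((p.2 : ℝ) - p.1) ^ 2
      ≤ β * ∑ n ∈ Finset.Icc 1 N, ((n : ℝ) - 1) / (n : ℝ) ^ 2 := by
    have hmaps : ∀ p ∈ S, p.2 - p.1 ∈ Finset.Icc 1 N := by
      intro p hp
      simp only [hS, Finset.mem_product, Finset.mem_range, Finset.mem_Icc] at hp ⊢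
      omega
    rw [← Finset.sum_fiberwise_of_maps_to hmaps (fun p => β / ((p.2 : ℝ) - p.1) ^ 2),
      Finset.mul_sum]
    apply Finset.sum_le_sum
    intro n hn
    have hn1 : 1 ≤ n := (Finset.mem_Icc.mp hn).1
    have hcard : (S.filter (fun p => p.2 - p.1 = n)).card ≤ n - 1 := by
      have hinj : ∀ p ∈ S.filter (fun p => p.2 - p.1 = n), p.1 ∈ Finset.Ico (i+1-n) i := by
        intro p hp
        simp only [hS, Finset.mem_filter, Finset.mem_product, Finset.mem_range,
          Finset.mem_Icc, Finset.mem_Ico] at hp ⊢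
        omega
      have := Finset.card_le_card_of_injOn (fun p : ℕ × ℕ => p.1) hinj (by
        intro p hp q hq hpq
        simp only [hS, Finset.mem_coe, Finset.mem_filter, Finset.mem_product,
          Finset.mem_range, Finset.mem_Icc] at hp hq
        simp only at hpq
        have : p.2 = q.2 := by omega
        exact Prod.ext hpq this)
      rw [Nat.card_Ico] at this
      omega
    have hterm : ∀ p ∈ S.filter (fun p => p.2 - p.1 = n),
        β / ((p.2 : ℝ) - p.1) ^ 2 = β / (n : ℝ) ^ 2 := by
      intro p hp
      simp only [hS, Finset.mem_filter, Finset.mem_product, Finset.mem_range,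
        Finset.mem_Icc] at hp
      have h1 : p.1 ≤ p.2 := by omega
      have hc : (p.2 : ℝ) - p.1 = n := by
        rw [← hp.2, Nat.cast_sub h1]
      rw [hc]
    rw [Finset.sum_congr rfl hterm, Finset.sum_const, nsmul_eq_mul]
    have hcast2 : ((S.filter (fun p => p.2 - p.1 = n)).card : ℝ) ≤ (n : ℝ) - 1 := by
      have h := (Nat.cast_le (α := ℝ)).mpr hcard
      rw [Nat.cast_sub hn1] at h
      push_cast at h ⊢
      linarith
    calc ((S.filter (fun p => p.2 - p.1 = n)).card : ℝ) * (β / (n:ℝ)^2)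
        ≤ ((n:ℝ) - 1) * (β / (n:ℝ)^2) := by
          apply mul_le_mul_of_nonneg_right hcast2 (by positivity)
      _ = β * (((n:ℝ)-1) / (n:ℝ)^2) := by ring
  have h2 : ∑ p ∈ S, (-β / ((p.2 : ℝ) - p.1) ^ 2) = -∑ p ∈ S, β / ((p.2 : ℝ) - p.1) ^ 2 := by
    rw [← Finset.sum_neg_distrib]
    exact Finset.sum_congr rfl fun p _ => by ring
  rw [h2]
  linarith

lemma my_sum_inv_sq_le (M : ℕ) (hM : 1 ≤ M) :
    ∑ n ∈ Icc 1 M, ((n:ℝ)^2)⁻¹ ≤ 2 - (M:ℝ)⁻¹ := by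
  induction M, hM using Nat.le_induction with
  | base => norm_num
  | succ M hM ih =>
    rw [Finset.sum_Icc_succ_top (by omega)]
    have h1 : (0:ℝ) < M := by exact_mod_cast hM
    have h2 : (0:ℝ) < (M:ℝ)+1 := by linarith
    have heq : (M:ℝ)⁻¹ - ((M:ℝ)+1)⁻¹ = ((M:ℝ)*((M:ℝ)+1))⁻¹ := by
      field_simp
      ring
    have hle : (((M:ℝ)+1)^2)⁻¹ ≤ ((M:ℝ)*((M:ℝ)+1))⁻¹ := by
      apply inv_anti₀ (by positivity)
      nlinarith
    have : (((M:ℝ)+1)^2)⁻¹ ≤ (M:ℝ)⁻¹ - ((M:ℝ)+1)⁻¹ := by rw [heq]; exact hle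
    push_cast
    linarith

lemma my_harmonic_eq (M : ℕ) :
    ∑ n ∈ Icc 1 M, ((n:ℝ))⁻¹ = (harmonic M : ℝ) := by
  have himg : Icc 1 M = (range M).image (· + 1) := by
    ext x
    simp only [Finset.mem_Icc, Finset.mem_image, Finset.mem_range]
    constructor
    · rintro ⟨h1, h2⟩; exact ⟨x - 1, by omega, by omega⟩
    · rintro ⟨i, hi, rfl⟩; omega
  rw [himg, Finset.sum_image (by intro x _ y _ h; simpa using h)]
  simp [harmonic]

lemma my_part2 (β : ℝ) (hβ : 0 < β) (M : ℕ) (hM : 1 ≤ M) :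
    Real.exp (-β) * (M : ℝ) ^ (-β) ≤
        Real.exp (-β * ∑ n ∈ Finset.Icc 1 M, ((n : ℝ) - 1) / (n : ℝ) ^ 2) ∧
      Real.exp (-β * ∑ n ∈ Finset.Icc 1 M, ((n : ℝ) - 1) / (n : ℝ) ^ 2)
        ≤ Real.exp (2*β) * (M : ℝ) ^ (-β) := by
  have hMpos : (0:ℝ) < M := by exact_mod_cast hM
  have hsplit : ∑ n ∈ Icc 1 M, ((n : ℝ) - 1) / (n : ℝ) ^ 2
      = ∑ n ∈ Icc 1 M, ((n:ℝ))⁻¹ - ∑ n ∈ Icc 1 M, ((n:ℝ)^2)⁻¹ := by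
    rw [← Finset.sum_sub_distrib]
    apply Finset.sum_congr rfl
    intro n hn
    have hn1 : 1 ≤ n := (Finset.mem_Icc.mp hn).1
    have : (n:ℝ) ≠ 0 := by positivity
    field_simp
  have hT0 : 0 ≤ ∑ n ∈ Icc 1 M, ((n:ℝ)^2)⁻¹ :=
    Finset.sum_nonneg fun n _ => by positivity
  have hT2 : ∑ n ∈ Icc 1 M, ((n:ℝ)^2)⁻¹ ≤ 2 :=
    (my_sum_inv_sq_le M hM).trans (by
      have h : (0:ℝ) < (M:ℝ)⁻¹ := by positivity
      linarith)
  have hH1 : Real.log M ≤ ∑ n ∈ Icc 1 M, ((n:ℝ))⁻¹ := by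
    rw [my_harmonic_eq]
    calc Real.log M ≤ Real.log (M+1) := by
          apply Real.log_le_log (by positivity); push_cast; linarith
    _ ≤ _ := by exact_mod_cast log_add_one_le_harmonic M
  have hH2 : ∑ n ∈ Icc 1 M, ((n:ℝ))⁻¹ ≤ 1 + Real.log M := by
    rw [my_harmonic_eq]; exact_mod_cast harmonic_le_one_add_log M
  have hrpow : (M:ℝ) ^ (-β) = Real.exp (-β * Real.log M) := by
    rw [Real.rpow_def_of_pos hMpos]; ring_nf
  constructor
  · rw [hrpow, ← Real.exp_add]
    apply Real.exp_le_exp.mpr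
    rw [hsplit]
    nlinarith
  · rw [hrpow, ← Real.exp_add]
    apply Real.exp_le_exp.mpr
    rw [hsplit]
    nlinarith

theorem stmt_8 {Ω : Type*} [MeasurableSpace Ω] (μ : Measure Ω) [IsProbabilityMeasure μ]
    (β : ℝ) (hβ : 0 < β) (N : ℕ) (hN : 2 ≤ N)
    (Edge : ℕ × ℕ → Set Ω) (hmeas : ∀ p, MeasurableSet (Edge p))
    (hindep : iIndepSet Edge μ)
    (hprob : ∀ j k : ℕ, j + 2 ≤ k → k ≤ N →
      μ (Edge (j, k)) = ENNReal.ofReal (1 - Real.exp (-β / ((k : ℝ) - j) ^ 2)))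
    (i : ℕ) (hi : 1 ≤ i) (hi' : i ≤ N - 1) :
    (ENNReal.ofReal (Real.exp (-β * ∑ n ∈ Finset.Icc 1 N, ((n : ℝ) - 1) / (n : ℝ) ^ 2))
        ≤ μ (⋂ p ∈ {p : ℕ × ℕ | p.1 < i ∧ i < p.2 ∧ p.2 ≤ N}, (Edge p)ᶜ)) ∧
      ∃ c₁ c₂ : ℝ, 0 < c₁ ∧ 0 < c₂ ∧ ∀ M : ℕ, 1 ≤ M →
        c₁ * (M : ℝ) ^ (-β) ≤
            Real.exp (-β * ∑ n ∈ Finset.Icc 1 M, ((n : ℝ) - 1) / (n : ℝ) ^ 2) ∧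
          Real.exp (-β * ∑ n ∈ Finset.Icc 1 M, ((n : ℝ) - 1) / (n : ℝ) ^ 2)
            ≤ c₂ * (M : ℝ) ^ (-β) := by
  refine ⟨my_part1 μ β hβ N hN Edge hmeas hindep hprob i hi hi',
    Real.exp (-β), Real.exp (2*β), Real.exp_pos _, Real.exp_pos _, fun M hM => my_part2 β hβ M hM⟩
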